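/- Let N ≥ 1, m, a ∈ ℤ, and let τ be a radius with 0 < τ < 1−q. Then: (1) for every 1 ≤ i ≤ N and every z ∈ ℂ with |z| > τ, ∮_{γ_τ} dζ / ( G*(ζ | i, m, a) · (z − ζ) ) = ∑_{k=1}^N ∮_{γ_τ} z^{−k} / G*(ζ | i−k+1, m, a) dζ; and (2) for every 1 ≤ j ≤ N and every z ∈ ℂ with |z| > τ, ∮_{γ_τ} z^{N+1} / ( G*(ζ | N+1−j, m, a) · (z − ζ) ) dζ = ∑_{k=1}^N ∮_{γ_τ} z^{k} / G*(ζ | k−j+1, m, a) dζ. -/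

import Mathlib

open MeasureTheory ProbabilityTheory Complex
open scoped Real BigOperators Nat

noncomputable section

/-- Forward difference operator `∇f(x) = f(x+1) − f(x)`. -/
def nab (f : ℤ → ℂ) : ℤ → ℂ := fun x => f (x + 1) - f x

/-- Inverse difference: `∇⁻¹f(x) = ∑_{y<x} f(y)` (a `tsum`; for functions vanishing
to the left of some integer this is the finite sum of the paper). -/
def nabInv (f : ℤ → ℂ) : ℤ → ℂ := fun x => ∑' y : {y : ℤ // y < x}, f y.1

/-- `∇^k` for `k : ℤ`. -/
def nabIter (k : ℤ) (f : ℤ → ℂ) : ℤ → ℂ :=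
  if 0 ≤ k then nab^[k.toNat] f else nabInv^[(-k).toNat] f

/-- The negative binomial weight `w_m(x)`. -/
def wgt (q : ℝ) (m : ℕ) : ℤ → ℂ := fun x =>
  if 0 ≤ x then ((x.toNat + m - 1).choose x.toNat : ℂ) * ((1 : ℂ) - (q : ℂ)) ^ m * (q : ℂ) ^ x
  else 0

/-- Component `x_k` (1-based) of a vector `x : Fin N → ℤ`. -/
def vcomp {N : ℕ} (x : Fin N → ℤ) (k : ℕ) : ℤ :=
  if h : k - 1 < N then x ⟨k - 1, h⟩ else 0

/-- 1-based access to a finite tuple, extended by `0` out of range. -/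
def fext {d : ℕ} {α : Type*} [Zero α] (x : Fin d → α) : ℕ → α := fun k =>
  if h : 1 ≤ k ∧ k ≤ d then x ⟨k - 1, by omega⟩ else 0

/-- The growth function `𝐆(m,n)` built from weights `w`. -/
def growth (w : ℕ → ℕ → ℕ) : ℕ → ℕ → ℕ
  | 0, _ => 0
  | _ + 1, 0 => 0
  | m + 1, n + 1 => max (growth w m (n + 1)) (growth w (m + 1) n) + w (m + 1) (n + 1)
  termination_by m n => m + n

/-- Normalized contour integral `(1/(2πi)) ∮_{|z−c|=R} f(z) dz` (counterclockwise circle). -/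
def cint (c : ℂ) (R : ℝ) (f : ℂ → ℂ) : ℂ :=
  (2 * Real.pi * Complex.I)⁻¹ * (∮ z in C(c, R), f z)

/-- Iterated normalized contour integrals with centers `c` and radii `R`. -/
def multiCintC : (k : ℕ) → (c : Fin k → ℂ) → (R : Fin k → ℝ) → ((Fin k → ℂ) → ℂ) → ℂ
  | 0, _, _, f => f ![]
  | k + 1, c, R, f =>
      cint (c 0) (R 0) fun z =>
        multiCintC k (fun t => c t.succ) (fun t => R t.succ) fun w => f (Fin.cons z w)

/-- `G*(w | n, m, a)`. -/
def Gstar (q : ℝ) (n m a : ℤ) (w : ℂ) : ℂ :=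
  w ^ n * (1 - w) ^ (a + m) / (1 - w / (1 - (q : ℂ))) ^ m

/-- `G(w | n, m, a) = G*(w | n,m,a)/G*(1−√q | n,m,a)`. -/
def Gfun (q : ℝ) (n m a : ℤ) (w : ℂ) : ℂ :=
  Gstar q n m a w / Gstar q n m a (1 - (Real.sqrt q : ℂ))

/-- The block index `r` such that `n_{r−1} < i ≤ n_r`. -/
def blockIdx (n : ℕ → ℕ) (i : ℕ) : ℕ := sInf {r : ℕ | i ≤ n r}

/-- `r* = min{r, p−1}` for the block of `i`. -/
def rstar (p : ℕ) (n : ℕ → ℕ) (i : ℕ) : ℕ := min (blockIdx n i) (p - 1)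

/-- `m(i) = m_{r*}`. -/
def mOf (p : ℕ) (n m : ℕ → ℕ) (i : ℕ) : ℕ := m (rstar p n i)

/-- `a(i) = a_{r*}`. -/
def aOf (p : ℕ) (n : ℕ → ℕ) (a : ℕ → ℤ) (i : ℕ) : ℤ := a (rstar p n i)

/-- `n(i) = n_{r*}`. -/
def nOf (p : ℕ) (n : ℕ → ℕ) (i : ℕ) : ℕ := n (rstar p n i)


/- ### Auxiliary lemmas -/

lemma Gstar_inv (q : ℝ) (m a n : ℤ) (w : ℂ) :
    (Gstar q n m a w)⁻¹
      = w ^ (-n) * ((1 - w) ^ (-(a + m)) * (1 - w / (1 - (q : ℂ))) ^ m) := by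
  simp only [Gstar, div_eq_mul_inv, mul_inv, inv_inv, zpow_neg]
  ring

lemma cint_congr {c : ℂ} {R : ℝ} {f g : ℂ → ℂ} (hR : 0 ≤ R)
    (h : Set.EqOn f g (Metric.sphere c R)) : cint c R f = cint c R g := by
  unfold cint
  rw [circleIntegral.integral_congr hR h]

lemma circleIntegral_add {f g : ℂ → ℂ} {c : ℂ} {R : ℝ} (hf : CircleIntegrable f c R)
    (hg : CircleIntegrable g c R) :
    (∮ z in C(c, R), (f z + g z)) = (∮ z in C(c, R), f z) + ∮ z in C(c, R), g z := by
  simp only [circleIntegral, smul_add, intervalIntegral.integral_add hf.out hg.out]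

lemma cint_add {f g : ℂ → ℂ} {c : ℂ} {R : ℝ} (hf : CircleIntegrable f c R)
    (hg : CircleIntegrable g c R) :
    cint c R (fun z => f z + g z) = cint c R f + cint c R g := by
  unfold cint
  rw [circleIntegral_add hf hg, mul_add]

lemma cint_sum {ι : Type*} (s : Finset ι) (F : ι → ℂ → ℂ) {c : ℂ} {R : ℝ}
    (h : ∀ i ∈ s, CircleIntegrable (F i) c R) :
    cint c R (fun z => ∑ i ∈ s, F i z) = ∑ i ∈ s, cint c R (F i) := by
  unfold cint
  have : (∮ z in C(c, R), ∑ i ∈ s, F i z) = ∑ i ∈ s, ∮ z in C(c, R), F i z := by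
    simp only [circleIntegral, Finset.smul_sum]
    exact intervalIntegral.integral_finset_sum fun i hi => (h i hi).out
  rw [this, Finset.mul_sum]

lemma telescope1 (z ζ B : ℂ) (hz : z ≠ 0) (hζ : ζ ≠ 0) (hzζ : z - ζ ≠ 0)
    (i : ℤ) (N : ℕ) :
    ζ ^ (-i) * B * (z - ζ)⁻¹
      = (∑ k ∈ Finset.Icc 1 N, z ^ (-(k : ℤ)) * (ζ ^ (-(i - (k : ℤ) + 1)) * B))
        + z ^ (-(N : ℤ)) * ζ ^ ((N : ℤ) - i) * B * (z - ζ)⁻¹ := by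
  set F : ℕ → ℂ := fun k => z ^ (-(k : ℤ)) * ζ ^ ((k : ℤ) - i) * B with hF
  have key : ∀ k : ℕ,
      (z - ζ) * (z ^ (-((1 + k : ℕ) : ℤ)) * (ζ ^ (-(i - ((1 + k : ℕ) : ℤ) + 1)) * B))
        = F k - F (k + 1) := by
    intro k
    simp only [hF]
    push_cast
    have h1 : ζ ^ (-(i - (1 + (k : ℤ)) + 1)) = ζ ^ ((k : ℤ) - i) := by
      congr 1; ring
    have h2 : z ^ (-(1 + (k : ℤ))) = z ^ (-(k : ℤ)) * z⁻¹ := by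
      rw [show -(1 + (k : ℤ)) = -(k : ℤ) + (-1) by ring, zpow_add₀ hz, zpow_neg_one]
    have h3 : z ^ (-((k : ℤ) + 1)) = z ^ (-(k : ℤ)) * z⁻¹ := by
      rw [show -((k : ℤ) + 1) = -(k : ℤ) + (-1) by ring, zpow_add₀ hz, zpow_neg_one]
    have h4 : ζ ^ ((k : ℤ) + 1 - i) = ζ ^ ((k : ℤ) - i) * ζ := by
      rw [show (k : ℤ) + 1 - i = ((k : ℤ) - i) + 1 by ring, zpow_add_one₀ hζ]
    rw [h1, h2, h3, h4]
    field_simp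
  have hsum : (z - ζ) * (∑ k ∈ Finset.Icc 1 N, z ^ (-(k : ℤ)) * (ζ ^ (-(i - (k : ℤ) + 1)) * B))
      = F 0 - F N := by
    rw [Finset.mul_sum, show Finset.Icc 1 N = Finset.Ico 1 (N + 1) by
      rw [Finset.Ico_add_one_right_eq_Icc], Finset.sum_Ico_eq_sum_range]
    simp only [Nat.add_sub_cancel]
    rw [← Finset.sum_range_sub' F N]
    exact Finset.sum_congr rfl fun k _ => key k
  have hS : (∑ k ∈ Finset.Icc 1 N, z ^ (-(k : ℤ)) * (ζ ^ (-(i - (k : ℤ) + 1)) * B))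
      = (F 0 - F N) * (z - ζ)⁻¹ := by
    rw [eq_mul_inv_iff_mul_eq₀ hzζ, mul_comm]
    exact hsum
  rw [hS]
  have hF0 : F 0 = ζ ^ (-i) * B := by simp [hF]
  have hFN : F N = z ^ (-(N : ℤ)) * ζ ^ ((N : ℤ) - i) * B := rfl
  rw [hF0, hFN]
  ring

lemma telescope2 (z ζ B : ℂ) (hz : z ≠ 0) (hζ : ζ ≠ 0) (hzζ : z - ζ ≠ 0)
    (j : ℤ) (N : ℕ) :
    z ^ ((N : ℤ) + 1) * (ζ ^ (-((N : ℤ) + 1 - j)) * B * (z - ζ)⁻¹)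
      = (∑ k ∈ Finset.Icc 1 N, z ^ ((k : ℤ)) * (ζ ^ (-((k : ℤ) - j + 1)) * B))
        + z * (ζ ^ (j - 1) * B * (z - ζ)⁻¹) := by
  set G : ℕ → ℂ := fun k => z ^ ((k : ℤ)) * ζ ^ (j - (k : ℤ)) * B with hG
  have key : ∀ k : ℕ,
      (z - ζ) * (z ^ (((1 + k : ℕ) : ℤ)) * (ζ ^ (-(((1 + k : ℕ) : ℤ) - j + 1)) * B))
        = G (k + 1 + 1) - G (k + 1) := by
    intro k
    simp only [hG]
    push_cast
    have h1 : ζ ^ (-(1 + (k : ℤ) - j + 1)) = ζ ^ (j - ((k : ℤ) + 2)) := by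
      congr 1; ring
    have h2 : z ^ (1 + (k : ℤ)) = z ^ ((k : ℤ)) * z := by
      rw [show 1 + (k : ℤ) = (k : ℤ) + 1 by ring, zpow_add_one₀ hz]
    have h3 : z ^ ((k : ℤ) + 1 + 1) = z ^ ((k : ℤ)) * z * z := by
      rw [zpow_add_one₀ hz, zpow_add_one₀ hz]
    have h4 : z ^ ((k : ℤ) + 1) = z ^ ((k : ℤ)) * z := by rw [zpow_add_one₀ hz]
    have h5 : ζ ^ (j - ((k : ℤ) + 1)) = ζ ^ (j - ((k : ℤ) + 2)) * ζ := by
      rw [show j - ((k : ℤ) + 1) = (j - ((k : ℤ) + 2)) + 1 by ring, zpow_add_one₀ hζ]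
    have h6 : ζ ^ (j - ((k : ℤ) + 1 + 1)) = ζ ^ (j - ((k : ℤ) + 2)) := by
      rw [show j - ((k : ℤ) + 1 + 1) = j - ((k : ℤ) + 2) by ring]
    rw [h1, h2, h3, h4, h5, h6]
    ring
  have hsum : (z - ζ) * (∑ k ∈ Finset.Icc 1 N, z ^ ((k : ℤ)) * (ζ ^ (-((k : ℤ) - j + 1)) * B))
      = G (N + 1) - G 1 := by
    rw [Finset.mul_sum, show Finset.Icc 1 N = Finset.Ico 1 (N + 1) by
      rw [Finset.Ico_add_one_right_eq_Icc], Finset.sum_Ico_eq_sum_range]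
    simp only [Nat.add_sub_cancel]
    rw [← Finset.sum_range_sub (fun k => G (k + 1)) N]
    exact Finset.sum_congr rfl fun k _ => key k
  have hS : (∑ k ∈ Finset.Icc 1 N, z ^ ((k : ℤ)) * (ζ ^ (-((k : ℤ) - j + 1)) * B))
      = (G (N + 1) - G 1) * (z - ζ)⁻¹ := by
    rw [eq_mul_inv_iff_mul_eq₀ hzζ, mul_comm]
    exact hsum
  rw [hS]
  have hGN : G (N + 1) = z ^ ((N : ℤ) + 1) * ζ ^ (-((N : ℤ) + 1 - j)) * B := by
    simp only [hG]
    rw [show ((N + 1 : ℕ) : ℤ) = (N : ℤ) + 1 by push_cast; ring,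
      show j - ((N : ℤ) + 1) = -((N : ℤ) + 1 - j) by ring]
  have hG1 : G 1 = z * ζ ^ (j - 1) * B := by
    simp [hG]
  rw [hGN, hG1]
  ring

/-- (Lemma `lem:Gintegral` of the paper.)  Two contour-integral
identities on the circle `γ_τ`, `0 < τ < 1 − q`, valid for `|z| > τ`. -/
theorem statement7
    (q : ℝ) (hq0 : 0 < q) (hq1 : q < 1)
    (N : ℕ) (hN : 1 ≤ N) (m a : ℤ) (τ : ℝ) (hτ0 : 0 < τ) (hτ : τ < 1 - q) :
    (∀ i : ℕ, 1 ≤ i → i ≤ N → ∀ z : ℂ, τ < ‖z‖ →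
      cint 0 τ (fun ζ => 1 / (Gstar q (i : ℤ) m a ζ * (z - ζ)))
        = ∑ k ∈ Finset.Icc 1 N,
            cint 0 τ (fun ζ => z ^ (-(k : ℤ)) / Gstar q ((i : ℤ) - k + 1) m a ζ))
    ∧ (∀ j : ℕ, 1 ≤ j → j ≤ N → ∀ z : ℂ, τ < ‖z‖ →
      cint 0 τ (fun ζ => z ^ ((N : ℤ) + 1) / (Gstar q ((N : ℤ) + 1 - j) m a ζ * (z - ζ)))
        = ∑ k ∈ Finset.Icc 1 N,
            cint 0 τ (fun ζ => z ^ (k : ℤ) / Gstar q ((k : ℤ) - j + 1) m a ζ)) := by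
  have h1q0 : (0:ℝ) < 1 - q := by linarith
  have habs1q : ‖(1 - (q : ℂ))‖ = 1 - q := by
    rw [show (1 : ℂ) - (q : ℂ) = ((1 - q : ℝ) : ℂ) by push_cast; ring, Complex.norm_real,
      Real.norm_eq_abs, abs_of_pos h1q0]
  have hne : (1 : ℂ) - (q : ℂ) ≠ 0 := fun h => by
    rw [h, norm_zero] at habs1q; linarith
  have hfacts : ∀ ζ : ℂ, ‖ζ‖ ≤ τ →
      1 - ζ ≠ 0 ∧ 1 - ζ / (1 - (q : ℂ)) ≠ 0 := by
    intro ζ hζ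
    constructor
    · intro h
      have h1 : ζ = 1 := by linear_combination -h
      rw [h1] at hζ; simp at hζ; linarith
    · intro h
      have h2 : ζ = 1 - (q : ℂ) := by
        field_simp at h
        linear_combination -h
      rw [h2, habs1q] at hζ; linarith
  have hBdiff : ∀ ζ : ℂ, ‖ζ‖ ≤ τ → DifferentiableAt ℂ
      (fun w : ℂ => (1 - w) ^ (-(a + m)) * (1 - w / (1 - (q : ℂ))) ^ m) ζ := by
    intro ζ hζ
    obtain ⟨hA, hB⟩ := hfacts ζ hζ
    have d1 : DifferentiableAt ℂ (fun w : ℂ => (1 - w) ^ (-(a + m))) ζ :=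
      DifferentiableAt.zpow ((differentiableAt_const _).sub differentiableAt_id) (Or.inl hA)
    have d2 : DifferentiableAt ℂ (fun w : ℂ => (1 - w / (1 - (q : ℂ))) ^ m) ζ :=
      DifferentiableAt.zpow
        ((differentiableAt_const _).sub (differentiableAt_id.div_const _)) (Or.inl hB)
    exact d1.mul d2
  have hBconts : ContinuousOn
      (fun ζ : ℂ => (1 - ζ) ^ (-(a + m)) * (1 - ζ / (1 - (q : ℂ))) ^ m)
      (Metric.sphere (0 : ℂ) τ) := by
    intro ζ hζs
    have hζτ : ‖ζ‖ = τ := by simpa [Complex.dist_eq] using hζs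
    exact ((hBdiff ζ hζτ.le).continuousAt).continuousWithinAt
  have hzpow : ∀ e : ℤ, ContinuousOn (fun ζ : ℂ => ζ ^ e) (Metric.sphere (0 : ℂ) τ) := by
    intro e ζ hζs
    have hζτ : ‖ζ‖ = τ := by simpa [Complex.dist_eq] using hζs
    have hζ0 : ζ ≠ 0 := fun h => by rw [h, norm_zero] at hζτ; linarith
    exact (continuousAt_zpow₀ ζ e (Or.inl hζ0)).continuousWithinAt
  constructor
  · -- part 1
    intro i hi1 hiN z hz
    have hz0 : z ≠ 0 := fun h => by rw [h, norm_zero] at hz; linarith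
    have hsub : ∀ ζ : ℂ, ‖ζ‖ ≤ τ → z - ζ ≠ 0 := by
      intro ζ hζ h
      have h1 : z = ζ := by linear_combination h
      rw [h1] at hz; linarith
    have hEq : ∀ ζ ∈ Metric.sphere (0 : ℂ) τ,
        1 / (Gstar q (i : ℤ) m a ζ * (z - ζ))
          = (∑ k ∈ Finset.Icc 1 N, z ^ (-(k : ℤ)) / Gstar q ((i : ℤ) - k + 1) m a ζ)
            + z ^ (-(N : ℤ)) * ζ ^ ((N : ℤ) - (i : ℤ))
                * ((1 - ζ) ^ (-(a + m)) * (1 - ζ / (1 - (q : ℂ))) ^ m) * (z - ζ)⁻¹ := by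
      intro ζ hζs
      have hζτ : ‖ζ‖ = τ := by simpa [Complex.dist_eq] using hζs
      have hζ0 : ζ ≠ 0 := fun h => by rw [h, norm_zero] at hζτ; linarith
      have hzζ : z - ζ ≠ 0 := hsub ζ hζτ.le
      rw [one_div, mul_inv, Gstar_inv,
        show (∑ k ∈ Finset.Icc 1 N, z ^ (-(k : ℤ)) / Gstar q ((i : ℤ) - k + 1) m a ζ)
            = ∑ k ∈ Finset.Icc 1 N, z ^ (-(k : ℤ)) * (ζ ^ (-((i : ℤ) - (k : ℤ) + 1))
                * ((1 - ζ) ^ (-(a + m)) * (1 - ζ / (1 - (q : ℂ))) ^ m))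
          from Finset.sum_congr rfl fun k _ => by rw [div_eq_mul_inv, Gstar_inv]]
      exact telescope1 z ζ _ hz0 hζ0 hzζ (i : ℤ) N
    have hint_g : ∀ k ∈ Finset.Icc 1 N,
        CircleIntegrable (fun ζ => z ^ (-(k : ℤ)) / Gstar q ((i : ℤ) - k + 1) m a ζ) 0 τ := by
      intro k _
      have he : (fun ζ : ℂ => z ^ (-(k : ℤ)) / Gstar q ((i : ℤ) - k + 1) m a ζ)
          = fun ζ => z ^ (-(k : ℤ)) * (ζ ^ (-((i : ℤ) - (k : ℤ) + 1))
              * ((1 - ζ) ^ (-(a + m)) * (1 - ζ / (1 - (q : ℂ))) ^ m)) :=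
        funext fun ζ => by rw [div_eq_mul_inv, Gstar_inv]
      rw [he]
      exact (continuousOn_const.mul ((hzpow _).mul hBconts)).circleIntegrable hτ0.le
    have hint_sum : CircleIntegrable
        (fun ζ => ∑ k ∈ Finset.Icc 1 N, z ^ (-(k : ℤ)) / Gstar q ((i : ℤ) - k + 1) m a ζ)
        0 τ := by
      have he : (fun ζ : ℂ => ∑ k ∈ Finset.Icc 1 N,
            z ^ (-(k : ℤ)) / Gstar q ((i : ℤ) - k + 1) m a ζ)
          = fun ζ => ∑ k ∈ Finset.Icc 1 N, z ^ (-(k : ℤ)) * (ζ ^ (-((i : ℤ) - (k : ℤ) + 1))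
              * ((1 - ζ) ^ (-(a + m)) * (1 - ζ / (1 - (q : ℂ))) ^ m)) :=
        funext fun ζ => Finset.sum_congr rfl fun k _ => by rw [div_eq_mul_inv, Gstar_inv]
      rw [he]
      refine ContinuousOn.circleIntegrable hτ0.le ?_
      exact continuousOn_finset_sum _ fun k _ => continuousOn_const.mul ((hzpow _).mul hBconts)
    have hdiff_h : ∀ ζ : ℂ, ‖ζ‖ ≤ τ → DifferentiableAt ℂ
        (fun w : ℂ => z ^ (-(N : ℤ)) * w ^ ((N : ℤ) - (i : ℤ))
            * ((1 - w) ^ (-(a + m)) * (1 - w / (1 - (q : ℂ))) ^ m) * (z - w)⁻¹) ζ := by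
      intro ζ hζ
      have hNi : (0 : ℤ) ≤ (N : ℤ) - (i : ℤ) := by omega
      exact (((differentiableAt_const _).mul
          (differentiableAt_zpow.mpr (Or.inr hNi))).mul (hBdiff ζ hζ)).mul
        (((differentiableAt_const z).sub differentiableAt_id).inv (hsub ζ hζ))
    have hint_h : CircleIntegrable
        (fun w : ℂ => z ^ (-(N : ℤ)) * w ^ ((N : ℤ) - (i : ℤ))
            * ((1 - w) ^ (-(a + m)) * (1 - w / (1 - (q : ℂ))) ^ m) * (z - w)⁻¹) 0 τ := by
      refine ContinuousOn.circleIntegrable hτ0.le ?_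
      intro ζ hζs
      have hζτ : ‖ζ‖ = τ := by simpa [Complex.dist_eq] using hζs
      exact ((hdiff_h ζ hζτ.le).continuousAt).continuousWithinAt
    have hzero : cint 0 τ
        (fun w : ℂ => z ^ (-(N : ℤ)) * w ^ ((N : ℤ) - (i : ℤ))
            * ((1 - w) ^ (-(a + m)) * (1 - w / (1 - (q : ℂ))) ^ m) * (z - w)⁻¹) = 0 := by
      have h0 : (∮ ζ in C(0, τ), (z ^ (-(N : ℤ)) * ζ ^ ((N : ℤ) - (i : ℤ))
          * ((1 - ζ) ^ (-(a + m)) * (1 - ζ / (1 - (q : ℂ))) ^ m) * (z - ζ)⁻¹)) = 0 := by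
        apply Complex.circleIntegral_eq_zero_of_differentiable_on_off_countable hτ0.le
          Set.countable_empty
        · intro ζ hζ
          have hζτ : ‖ζ‖ ≤ τ := by
            simpa [Complex.dist_eq] using hζ
          exact ((hdiff_h ζ hζτ).continuousAt).continuousWithinAt
        · intro ζ hζ
          have hζτ : ‖ζ‖ ≤ τ := by
            have := hζ.1
            simp only [Metric.mem_ball, Complex.dist_eq, sub_zero] at this
            linarith
          exact hdiff_h ζ hζτ
      unfold cint
      rw [h0, mul_zero]
    calc cint 0 τ (fun ζ => 1 / (Gstar q (i : ℤ) m a ζ * (z - ζ)))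
        = cint 0 τ (fun ζ =>
            (∑ k ∈ Finset.Icc 1 N, z ^ (-(k : ℤ)) / Gstar q ((i : ℤ) - k + 1) m a ζ)
            + z ^ (-(N : ℤ)) * ζ ^ ((N : ℤ) - (i : ℤ))
                * ((1 - ζ) ^ (-(a + m)) * (1 - ζ / (1 - (q : ℂ))) ^ m) * (z - ζ)⁻¹) :=
          cint_congr hτ0.le fun ζ hζ => hEq ζ hζ
      _ = cint 0 τ (fun ζ =>
            ∑ k ∈ Finset.Icc 1 N, z ^ (-(k : ℤ)) / Gstar q ((i : ℤ) - k + 1) m a ζ)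
          + cint 0 τ (fun w : ℂ => z ^ (-(N : ℤ)) * w ^ ((N : ℤ) - (i : ℤ))
            * ((1 - w) ^ (-(a + m)) * (1 - w / (1 - (q : ℂ))) ^ m) * (z - w)⁻¹) :=
          cint_add hint_sum hint_h
      _ = (∑ k ∈ Finset.Icc 1 N,
            cint 0 τ (fun ζ => z ^ (-(k : ℤ)) / Gstar q ((i : ℤ) - k + 1) m a ζ)) + 0 := by
          rw [cint_sum _ _ hint_g, hzero]
      _ = ∑ k ∈ Finset.Icc 1 N,
            cint 0 τ (fun ζ => z ^ (-(k : ℤ)) / Gstar q ((i : ℤ) - k + 1) m a ζ) := add_zero _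
  · -- part 2
    intro j hj1 hjN z hz
    have hz0 : z ≠ 0 := fun h => by rw [h, norm_zero] at hz; linarith
    have hsub : ∀ ζ : ℂ, ‖ζ‖ ≤ τ → z - ζ ≠ 0 := by
      intro ζ hζ h
      have h1 : z = ζ := by linear_combination h
      rw [h1] at hz; linarith
    have hEq : ∀ ζ ∈ Metric.sphere (0 : ℂ) τ,
        z ^ ((N : ℤ) + 1) / (Gstar q ((N : ℤ) + 1 - j) m a ζ * (z - ζ))
          = (∑ k ∈ Finset.Icc 1 N, z ^ (k : ℤ) / Gstar q ((k : ℤ) - j + 1) m a ζ)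
            + z * (ζ ^ ((j : ℤ) - 1)
                * ((1 - ζ) ^ (-(a + m)) * (1 - ζ / (1 - (q : ℂ))) ^ m) * (z - ζ)⁻¹) := by
      intro ζ hζs
      have hζτ : ‖ζ‖ = τ := by simpa [Complex.dist_eq] using hζs
      have hζ0 : ζ ≠ 0 := fun h => by rw [h, norm_zero] at hζτ; linarith
      have hzζ : z - ζ ≠ 0 := hsub ζ hζτ.le
      rw [div_eq_mul_inv, mul_inv, Gstar_inv,
        show (∑ k ∈ Finset.Icc 1 N, z ^ (k : ℤ) / Gstar q ((k : ℤ) - j + 1) m a ζ)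
            = ∑ k ∈ Finset.Icc 1 N, z ^ ((k : ℤ)) * (ζ ^ (-((k : ℤ) - (j : ℤ) + 1))
                * ((1 - ζ) ^ (-(a + m)) * (1 - ζ / (1 - (q : ℂ))) ^ m))
          from Finset.sum_congr rfl fun k _ => by rw [div_eq_mul_inv, Gstar_inv]]
      exact telescope2 z ζ _ hz0 hζ0 hzζ (j : ℤ) N
    have hint_g : ∀ k ∈ Finset.Icc 1 N,
        CircleIntegrable (fun ζ => z ^ (k : ℤ) / Gstar q ((k : ℤ) - j + 1) m a ζ) 0 τ := by
      intro k _
      have he : (fun ζ : ℂ => z ^ (k : ℤ) / Gstar q ((k : ℤ) - j + 1) m a ζ)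
          = fun ζ => z ^ ((k : ℤ)) * (ζ ^ (-((k : ℤ) - (j : ℤ) + 1))
              * ((1 - ζ) ^ (-(a + m)) * (1 - ζ / (1 - (q : ℂ))) ^ m)) :=
        funext fun ζ => by rw [div_eq_mul_inv, Gstar_inv]
      rw [he]
      exact (continuousOn_const.mul ((hzpow _).mul hBconts)).circleIntegrable hτ0.le
    have hint_sum : CircleIntegrable
        (fun ζ => ∑ k ∈ Finset.Icc 1 N, z ^ (k : ℤ) / Gstar q ((k : ℤ) - j + 1) m a ζ)
        0 τ := by
      have he : (fun ζ : ℂ => ∑ k ∈ Finset.Icc 1 N,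
            z ^ (k : ℤ) / Gstar q ((k : ℤ) - j + 1) m a ζ)
          = fun ζ => ∑ k ∈ Finset.Icc 1 N, z ^ ((k : ℤ)) * (ζ ^ (-((k : ℤ) - (j : ℤ) + 1))
              * ((1 - ζ) ^ (-(a + m)) * (1 - ζ / (1 - (q : ℂ))) ^ m)) :=
        funext fun ζ => Finset.sum_congr rfl fun k _ => by rw [div_eq_mul_inv, Gstar_inv]
      rw [he]
      refine ContinuousOn.circleIntegrable hτ0.le ?_
      exact continuousOn_finset_sum _ fun k _ => continuousOn_const.mul ((hzpow _).mul hBconts)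
    have hdiff_h : ∀ ζ : ℂ, ‖ζ‖ ≤ τ → DifferentiableAt ℂ
        (fun w : ℂ => z * (w ^ ((j : ℤ) - 1)
            * ((1 - w) ^ (-(a + m)) * (1 - w / (1 - (q : ℂ))) ^ m) * (z - w)⁻¹)) ζ := by
      intro ζ hζ
      have hj0 : (0 : ℤ) ≤ (j : ℤ) - 1 := by omega
      exact (differentiableAt_const z).mul
        (((differentiableAt_zpow.mpr (Or.inr hj0)).mul (hBdiff ζ hζ)).mul
          (((differentiableAt_const z).sub differentiableAt_id).inv (hsub ζ hζ)))
    have hint_h : CircleIntegrable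
        (fun w : ℂ => z * (w ^ ((j : ℤ) - 1)
            * ((1 - w) ^ (-(a + m)) * (1 - w / (1 - (q : ℂ))) ^ m) * (z - w)⁻¹)) 0 τ := by
      refine ContinuousOn.circleIntegrable hτ0.le ?_
      intro ζ hζs
      have hζτ : ‖ζ‖ = τ := by simpa [Complex.dist_eq] using hζs
      exact ((hdiff_h ζ hζτ.le).continuousAt).continuousWithinAt
    have hzero : cint 0 τ
        (fun w : ℂ => z * (w ^ ((j : ℤ) - 1)
            * ((1 - w) ^ (-(a + m)) * (1 - w / (1 - (q : ℂ))) ^ m) * (z - w)⁻¹)) = 0 := by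
      have h0 : (∮ ζ in C(0, τ), (z * (ζ ^ ((j : ℤ) - 1)
          * ((1 - ζ) ^ (-(a + m)) * (1 - ζ / (1 - (q : ℂ))) ^ m) * (z - ζ)⁻¹))) = 0 := by
        apply Complex.circleIntegral_eq_zero_of_differentiable_on_off_countable hτ0.le
          Set.countable_empty
        · intro ζ hζ
          have hζτ : ‖ζ‖ ≤ τ := by
            simpa [Complex.dist_eq] using hζ
          exact ((hdiff_h ζ hζτ).continuousAt).continuousWithinAt
        · intro ζ hζ
          have hζτ : ‖ζ‖ ≤ τ := by
            have := hζ.1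
            simp only [Metric.mem_ball, Complex.dist_eq, sub_zero] at this
            linarith
          exact hdiff_h ζ hζτ
      unfold cint
      rw [h0, mul_zero]
    calc cint 0 τ (fun ζ => z ^ ((N : ℤ) + 1) / (Gstar q ((N : ℤ) + 1 - j) m a ζ * (z - ζ)))
        = cint 0 τ (fun ζ =>
            (∑ k ∈ Finset.Icc 1 N, z ^ (k : ℤ) / Gstar q ((k : ℤ) - j + 1) m a ζ)
            + z * (ζ ^ ((j : ℤ) - 1)
                * ((1 - ζ) ^ (-(a + m)) * (1 - ζ / (1 - (q : ℂ))) ^ m) * (z - ζ)⁻¹)) :=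
          cint_congr hτ0.le fun ζ hζ => hEq ζ hζ
      _ = cint 0 τ (fun ζ =>
            ∑ k ∈ Finset.Icc 1 N, z ^ (k : ℤ) / Gstar q ((k : ℤ) - j + 1) m a ζ)
          + cint 0 τ (fun w : ℂ => z * (w ^ ((j : ℤ) - 1)
            * ((1 - w) ^ (-(a + m)) * (1 - w / (1 - (q : ℂ))) ^ m) * (z - w)⁻¹)) :=
          cint_add hint_sum hint_h
      _ = (∑ k ∈ Finset.Icc 1 N,
            cint 0 τ (fun ζ => z ^ (k : ℤ) / Gstar q ((k : ℤ) - j + 1) m a ζ)) + 0 := by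
          rw [cint_sum _ _ hint_g, hzero]
      _ = ∑ k ∈ Finset.Icc 1 N,
            cint 0 τ (fun ζ => z ^ (k : ℤ) / Gstar q ((k : ℤ) - j + 1) m a ζ) := add_zero _

end
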